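/- Let H be a complex Hilbert space and let T be a densely defined linear operator in H. Assume that TT* is densely defined and that there exists a complex number λ such that TT* − λI is boundedly invertible. Then TT* is self-adjoint, i.e., (TT*)* = TT*. -/

import Mathlib

namespace LinearPMap

section Pcomp

variable {R E F G : Type*} [CommRing R]
  [AddCommGroup E] [Module R E]
  [AddCommGroup F] [Module R F]
  [AddCommGroup G] [Module R G]

/-- Composition of partially defined linear maps (unbounded operators), with the natural
domain `D(A ∘ B) = {x ∈ D(B) : B x ∈ D(A)}`, sending `x` to `A (B x)`. -/
noncomputable def pcomp (A : F →ₗ.[R] G) (B : E →ₗ.[R] F) : E →ₗ.[R] G where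
  domain := (A.domain.comap B.toFun).map B.domain.subtype
  toFun := A.toFun.comp <|
    (LinearMap.codRestrict A.domain
        (B.toFun.comp (A.domain.comap B.toFun).subtype) fun x => x.2).comp
      (Submodule.equivMapOfInjective B.domain.subtype
        (Submodule.injective_subtype _) (A.domain.comap B.toFun)).symm.toLinearMap

theorem mem_pcomp_domain {A : F →ₗ.[R] G} {B : E →ₗ.[R] F} {x : E} :
    x ∈ (A.pcomp B).domain ↔ ∃ hx : x ∈ B.domain, B ⟨x, hx⟩ ∈ A.domain := by
  constructor
  · rintro ⟨y, hy, rfl⟩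
    exact ⟨y.2, by simpa using hy⟩
  · rintro ⟨hx, hx'⟩
    exact ⟨⟨x, hx⟩, hx', rfl⟩

theorem pcomp_apply {A : F →ₗ.[R] G} {B : E →ₗ.[R] F} (x : (A.pcomp B).domain)
    (hx : (x : E) ∈ B.domain) (hx' : B ⟨(x : E), hx⟩ ∈ A.domain) :
    (A.pcomp B) x = A ⟨B ⟨(x : E), hx⟩, hx'⟩ := by
  set e := (Submodule.equivMapOfInjective B.domain.subtype
    (Submodule.injective_subtype _) (A.domain.comap B.toFun)) with he
  have hy : (((e.symm x : _) : B.domain) : E) = (x : E) := by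
    conv_rhs => rw [← e.apply_symm_apply x]
    rfl
  have h2 : ((e.symm x : _) : B.domain) = ⟨(x : E), hx⟩ := Subtype.ext hy
  show A.toFun _ = A.toFun _
  congr 1
  exact Subtype.ext (congrArg B.toFun h2)

end Pcomp

end LinearPMap

/-- `A - λ•I` is boundedly invertible: there is a bounded everywhere-defined operator `B`
on `H` with `B ((A - λ) x) = x` for all `x ∈ D(A)`, and for all `y ∈ H`, `B y ∈ D(A)` and
`(A - λ) (B y) = y`. -/
def IsBoundedlyInvertibleShift {H : Type*} [NormedAddCommGroup H] [InnerProductSpace ℂ H]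
    (A : H →ₗ.[ℂ] H) (lam : ℂ) : Prop :=
  ∃ B : H →L[ℂ] H,
    (∀ x : A.domain, B (A x - lam • (x : H)) = (x : H)) ∧
    (∀ y : H, ∃ hy : B y ∈ A.domain, A ⟨B y, hy⟩ - lam • B y = y)

open scoped LinearPMap

noncomputable section SelfAdjAux

namespace SelfAdjAux

open Metric

/-- The nonnegative real ray inside `ℂ`. -/
def ray : Set ℂ := {z : ℂ | 0 ≤ z.re ∧ z.im = 0}

lemma isClosed_ray : IsClosed ray :=
  (isClosed_le continuous_const Complex.continuous_re).inter
    (isClosed_eq Complex.continuous_im continuous_const)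

lemma ofReal_mem_ray {q : ℝ} (hq : 0 ≤ q) : (q : ℂ) ∈ ray := by
  simp [ray, hq]

/-- The complement of the ray. -/
def U : Set ℂ := rayᶜ

lemma mem_U_of_im_ne {z : ℂ} (hz : z.im ≠ 0) : z ∈ U := by
  simp [U, ray, hz]

lemma segment_subset_U {μ : ℂ} (hμ : μ ∈ U) : segment ℝ (-1 : ℂ) μ ⊆ U := by
  rintro p ⟨a, b, ha, hb, hab, rfl⟩
  intro hp
  obtain ⟨hre, him⟩ := hp
  have hre' : (a • (-1 : ℂ) + b • μ).re = -a + b * μ.re := by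
    simp [Complex.add_re, Complex.smul_re]
  have him' : (a • (-1 : ℂ) + b • μ).im = b * μ.im := by
    simp [Complex.add_im, Complex.smul_im]
  rw [hre'] at hre
  rw [him'] at him
  by_cases himμ : μ.im = 0
  · have hreμ : μ.re < 0 := by
      by_contra h
      exact hμ ⟨le_of_not_gt h, himμ⟩
    have h1 : b * μ.re ≤ 0 := mul_nonpos_of_nonneg_of_nonpos hb hreμ.le
    have ha0 : a = 0 := le_antisymm (by linarith) ha
    have hb1 : b = 1 := by linarith
    rw [ha0, hb1] at hre
    simp at hre
    linarith
  · have hb0 : b = 0 := by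
      rcases mul_eq_zero.mp him with h | h
      · exact h
      · exact absurd h himμ
    have : a = 1 := by linarith
    rw [this, hb0] at hre
    norm_num at hre

lemma isPreconnected_U : IsPreconnected U := by
  have h : U = ⋃₀ ((fun μ => segment ℝ (-1 : ℂ) μ) '' U) := by
    apply Set.Subset.antisymm
    · intro μ hμ
      exact ⟨segment ℝ (-1 : ℂ) μ, ⟨μ, hμ, rfl⟩, right_mem_segment ℝ _ _⟩
    · rintro p ⟨s, ⟨μ, hμ, rfl⟩, hp⟩
      exact segment_subset_U hμ hp
  rw [h]
  apply isPreconnected_sUnion (-1 : ℂ)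
  · rintro s ⟨μ, _, rfl⟩
    exact left_mem_segment ℝ _ _
  · rintro s ⟨μ, _, rfl⟩
    exact (convex_segment _ _).isPreconnected

lemma infDist_pos_of_mem_U {μ : ℂ} (hμ : μ ∈ U) : 0 < infDist μ ray :=
  (isClosed_ray.notMem_iff_infDist_pos ⟨0, by simp [ray]⟩).mp hμ

section Operators

variable {H : Type*} [NormedAddCommGroup H] [InnerProductSpace ℂ H]

local notation "⟪" x ", " y "⟫" => @inner ℂ _ _ x y

/-- Lower bound `d(μ, ray) * ‖x‖ ≤ ‖(A - μ) x‖` for a nonnegative operator. -/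
lemma lower_bound {A : H →ₗ.[ℂ] H}
    (hnn : ∀ x : A.domain, ∃ q : ℝ, 0 ≤ q ∧ ⟪(x : H), A x⟫ = (q : ℂ))
    (μ : ℂ) (x : A.domain) :
    infDist μ ray * ‖(x : H)‖ ≤ ‖A x - μ • (x : H)‖ := by
  by_cases hx0 : (x : H) = 0
  · simp [hx0]
  have hr : 0 < ‖(x : H)‖ := norm_pos_iff.mpr hx0
  obtain ⟨q, hq0, hq⟩ := hnn x
  set r : ℝ := ‖(x : H)‖ with hrdef
  have key : ⟪(x : H), A x - μ • (x : H)⟫ = (q : ℂ) - μ * (r : ℂ) ^ 2 := by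
    rw [inner_sub_right, inner_smul_right, hq, inner_self_eq_norm_sq_to_K]
    norm_num [hrdef]
  have hfact : (q : ℂ) - μ * (r : ℂ) ^ 2 = ((r ^ 2 : ℝ) : ℂ) * (((q / r ^ 2 : ℝ) : ℂ) - μ) := by
    have hr2c : (r : ℂ) ≠ 0 := by exact_mod_cast hr.ne'
    push_cast
    field_simp
  have hmem : ((q / r ^ 2 : ℝ) : ℂ) ∈ ray :=
    ofReal_mem_ray (div_nonneg hq0 (sq_nonneg r))
  have hdist : infDist μ ray ≤ ‖((q / r ^ 2 : ℝ) : ℂ) - μ‖ := by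
    have h := infDist_le_dist_of_mem (x := μ) hmem
    rwa [Complex.dist_eq, ← norm_neg, neg_sub] at h
  have hCS : ‖⟪(x : H), A x - μ • (x : H)⟫‖ ≤ r * ‖A x - μ • (x : H)‖ := by
    exact norm_inner_le_norm (𝕜 := ℂ) (x : H) (A x - μ • (x : H))
  have habs : ‖⟪(x : H), A x - μ • (x : H)⟫‖
      = r ^ 2 * ‖((q / r ^ 2 : ℝ) : ℂ) - μ‖ := by
    rw [key, hfact, norm_mul]
    simp [abs_of_nonneg (sq_nonneg r)]
  have h1 : infDist μ ray * r ^ 2 ≤ r * ‖A x - μ • (x : H)‖ := by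
    calc infDist μ ray * r ^ 2 ≤ ‖((q / r ^ 2 : ℝ) : ℂ) - μ‖ * r ^ 2 :=
          mul_le_mul_of_nonneg_right hdist (sq_nonneg r)
    _ = ‖⟪(x : H), A x - μ • (x : H)⟫‖ := by rw [habs]; ring
    _ ≤ r * ‖A x - μ • (x : H)‖ := hCS
  nlinarith [hr, h1]

variable [CompleteSpace H]

/-- Perturbation of bounded invertibility. -/
lemma pert {A : H →ₗ.[ℂ] H} {μ μ' : ℂ} {c : ℝ} (hc : 0 < c)
    (hbound : ∀ x : A.domain, c * ‖(x : H)‖ ≤ ‖A x - μ • (x : H)‖)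
    (hinv : IsBoundedlyInvertibleShift A μ) (hμ' : ‖μ' - μ‖ < c) :
    IsBoundedlyInvertibleShift A μ' := by
  obtain ⟨B, hB1, hB2⟩ := hinv
  have hBnorm : ∀ y : H, ‖B y‖ ≤ c⁻¹ * ‖y‖ := by
    intro y
    obtain ⟨hy, he⟩ := hB2 y
    have h2 := hbound ⟨B y, hy⟩
    rw [he] at h2
    calc ‖B y‖ ≤ ‖y‖ / c := (le_div_iff₀' hc).mpr h2
      _ = c⁻¹ * ‖y‖ := by rw [div_eq_inv_mul]
  set t : H →L[ℂ] H := (μ' - μ) • B with ht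
  have htnorm : ‖t‖ < 1 := by
    have h1 : ‖t‖ = ‖μ' - μ‖ * ‖B‖ := by
      rw [ht, norm_smul]
    have hBop : ‖B‖ ≤ c⁻¹ := ContinuousLinearMap.opNorm_le_bound B (by positivity) hBnorm
    calc ‖t‖ ≤ ‖μ' - μ‖ * c⁻¹ := by
          rw [h1]; exact mul_le_mul_of_nonneg_left hBop (by positivity)
      _ < c * c⁻¹ := by
          apply mul_lt_mul_of_pos_right hμ' (by positivity)
      _ = 1 := mul_inv_cancel₀ hc.ne'
  set u : (H →L[ℂ] H)ˣ := Units.oneSub t htnorm with hu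
  set C : H →L[ℂ] H := ↑u⁻¹ with hC
  have huval : (u : H →L[ℂ] H) = 1 - t := rfl
  have hCl : C * (1 - t) = 1 := by rw [← huval, hC, Units.inv_mul]
  have hCr : (1 - t) * C = 1 := by rw [← huval, hC, Units.mul_inv]
  have hcomm : Commute B C := by
    apply Commute.units_inv_right
    show B * u = u * B
    rw [huval]
    simp only [mul_sub, sub_mul, mul_one, one_mul, ht]
    rw [smul_mul_assoc, mul_smul_comm]
  refine ⟨B * C, ?_, ?_⟩
  · intro x
    have h1 : B (A x - μ' • (x : H)) = ((1 - t) : H →L[ℂ] H) (x : H) := by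
      have : A x - μ' • (x : H) = (A x - μ • (x : H)) - (μ' - μ) • (x : H) := by
        rw [sub_smul]; abel
      rw [this, map_sub, hB1, map_smul]
      simp [ht]
    calc (B * C) (A x - μ' • (x : H)) = (C * B) (A x - μ' • (x : H)) := by rw [hcomm.eq]
      _ = C (B (A x - μ' • (x : H))) := rfl
      _ = C (((1 - t) : H →L[ℂ] H) (x : H)) := by rw [h1]
      _ = (C * (1 - t)) (x : H) := rfl
      _ = (x : H) := by rw [hCl]; rfl
  · intro y
    obtain ⟨hy, he⟩ := hB2 (C y)
    have hmem : (B * C) y ∈ A.domain := hy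
    refine ⟨hmem, ?_⟩
    have h3 : A ⟨(B * C) y, hmem⟩ - μ • (B * C) y = C y := he
    calc A ⟨(B * C) y, hmem⟩ - μ' • (B * C) y
        = (A ⟨(B * C) y, hmem⟩ - μ • (B * C) y) - (μ' - μ) • ((B * C) y) := by
          rw [sub_smul]; abel
      _ = C y - t (C y) := by rw [h3, ht]; simp
      _ = ((1 - t) * C) y := by simp [ContinuousLinearMap.mul_apply, ContinuousLinearMap.sub_apply]
      _ = y := by rw [hCr]; rfl

/-- From invertibility at a point of `U`, invertibility at each point of `U`. -/
lemma inv_all_U {A : H →ₗ.[ℂ] H}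
    (hnn : ∀ x : A.domain, ∃ q : ℝ, 0 ≤ q ∧ ⟪(x : H), A x⟫ = (q : ℂ))
    {lam : ℂ} (hlam : lam ∈ U) (hinv : IsBoundedlyInvertibleShift A lam)
    {μ : ℂ} (hμ : μ ∈ U) : IsBoundedlyInvertibleShift A μ := by
  classical
  set P : ℂ → Prop := fun ν => IsBoundedlyInvertibleShift A ν with hP
  have step : ∀ ν ∈ U, P ν → ∀ ν' : ℂ, dist ν' ν < infDist ν ray → P ν' := by
    intro ν hν hPν ν' hd
    exact pert (infDist_pos_of_mem_U hν) (lower_bound hnn ν) hPν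
      (by rwa [← Complex.dist_eq])
  set uu : Set ℂ := ⋃ (ν : ℂ) (_ : ν ∈ U ∧ P ν), ball ν (infDist ν ray / 3) with huu
  set vv : Set ℂ := ⋃ (ν : ℂ) (_ : ν ∈ U ∧ ¬ P ν), ball ν (infDist ν ray / 3) with hvv
  have hopen_u : IsOpen uu := isOpen_iUnion fun ν => isOpen_iUnion fun _ => isOpen_ball
  have hopen_v : IsOpen vv := isOpen_iUnion fun ν => isOpen_iUnion fun _ => isOpen_ball
  have hdisj : Disjoint uu vv := by
    rw [Set.disjoint_left]
    rintro z hzu hzv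
    simp only [huu, hvv, Set.mem_iUnion, mem_ball] at hzu hzv
    obtain ⟨ν₁, ⟨hν₁U, hν₁P⟩, hz₁⟩ := hzu
    obtain ⟨ν₂, ⟨hν₂U, hν₂P⟩, hz₂⟩ := hzv
    have hLip : infDist ν₂ ray ≤ infDist ν₁ ray + dist ν₂ ν₁ :=
      infDist_le_infDist_add_dist
    have hd12 : dist ν₂ ν₁ ≤ dist ν₂ z + dist z ν₁ := dist_triangle _ _ _
    have h12 : dist ν₂ ν₁ < infDist ν₁ ray := by
      have := dist_comm z ν₂ ▸ hz₂
      nlinarith [dist_comm z ν₁ ▸ hz₁]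
    exact hν₂P (step ν₁ hν₁U hν₁P ν₂ h12)
  have hcover : U ⊆ uu ∪ vv := by
    intro ν hν
    have hpos : 0 < infDist ν ray / 3 := by
      have := infDist_pos_of_mem_U hν
      linarith
    by_cases hPν : P ν
    · exact Or.inl (Set.mem_iUnion.mpr ⟨ν, Set.mem_iUnion.mpr ⟨⟨hν, hPν⟩, mem_ball_self hpos⟩⟩)
    · exact Or.inr (Set.mem_iUnion.mpr ⟨ν, Set.mem_iUnion.mpr ⟨⟨hν, hPν⟩, mem_ball_self hpos⟩⟩)
  have hne : (U ∩ uu).Nonempty := by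
    refine ⟨lam, hlam, Set.mem_iUnion.mpr ⟨lam, Set.mem_iUnion.mpr ⟨⟨hlam, hinv⟩, ?_⟩⟩⟩
    exact mem_ball_self (by have := infDist_pos_of_mem_U hlam; linarith)
  have hsub : U ⊆ uu :=
    isPreconnected_U.subset_left_of_subset_union hopen_u hopen_v hdisj hcover hne
  have hμu := hsub hμ
  simp only [huu, Set.mem_iUnion, mem_ball] at hμu
  obtain ⟨ν, ⟨hνU, hνP⟩, hd⟩ := hμu
  refine step ν hνU hνP μ ?_
  have := infDist_pos_of_mem_U hνU
  linarith

/-- The key abstract result: a densely defined symmetric nonnegative operator `A` such that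
`A - λ` is boundedly invertible for some `λ` is self-adjoint. -/
theorem adjoint_eq {A : H →ₗ.[ℂ] H} (hd : Dense (A.domain : Set H))
    (hsym : A.IsFormalAdjoint A)
    (hnn : ∀ x : A.domain, ∃ q : ℝ, 0 ≤ q ∧ ⟪(x : H), A x⟫ = (q : ℂ))
    (hinv : ∃ lam : ℂ, IsBoundedlyInvertibleShift A lam) :
    A† = A := by
  obtain ⟨lam, hlam⟩ := hinv
  have hconj : IsBoundedlyInvertibleShift A (starRingEnd ℂ lam) := by
    by_cases him : lam.im = 0
    · rwa [Complex.conj_eq_iff_im.mpr him]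
    · exact inv_all_U hnn (mem_U_of_im_ne him) hlam
        (mem_U_of_im_ne (by simpa using him))
  have h1 : A ≤ A† := hsym.le_adjoint hd
  have hfa : A†.IsFormalAdjoint A := LinearPMap.adjoint_isFormalAdjoint hd
  refine le_antisymm ?_ h1
  obtain ⟨B, hB1, hB2⟩ := hlam
  obtain ⟨B', hB'1, hB'2⟩ := hconj
  refine ⟨?_, ?_⟩
  swap
  · intro x y hxy
    exact (h1.2 hxy.symm).symm
  intro y hy
  set yA : A†.domain := ⟨y, hy⟩ with hyA
  set z : H := A† yA - lam • y with hz
  obtain ⟨hxmem, hxe⟩ := hB2 z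
  set x : A.domain := ⟨B z, hxmem⟩ with hx
  set v : H := y - (x : H) with hv
  have hvzero : v = 0 := by
    have hinner : ∀ w : H, ⟪v, w⟫ = 0 := by
      intro w
      obtain ⟨hu, hue⟩ := hB'2 w
      set u : A.domain := ⟨B' w, hu⟩ with hud
      have hw : w = A u - (starRingEnd ℂ lam) • (u : H) := hue.symm
      have h2 : ⟪v, A u⟫ = (starRingEnd ℂ) lam * ⟪v, (u : H)⟫ := by
        have hyu : ⟪y, A u⟫ = ⟪A† yA, (u : H)⟫ := (hfa yA u).symm
        have hxu : ⟪(x : H), A u⟫ = ⟪A x, (u : H)⟫ := (hsym x u).symm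
        have hAx : A x = z + lam • (x : H) := by
          rw [← hxe]; abel
        have hdiff : A† yA - A x = lam • v := by
          rw [hAx, hz, hv, smul_sub]; abel
        calc ⟪v, A u⟫ = ⟪y, A u⟫ - ⟪(x : H), A u⟫ := by rw [hv, inner_sub_left]
          _ = ⟪A† yA - A x, (u : H)⟫ := by rw [hyu, hxu, inner_sub_left]
          _ = ⟪lam • v, (u : H)⟫ := by rw [hdiff]
          _ = (starRingEnd ℂ) lam * ⟪v, (u : H)⟫ := inner_smul_left _ _ _
      rw [hw, inner_sub_right, inner_smul_right, h2]
      ring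
    exact inner_self_eq_zero.mp (hinner v)
  have hyx : y = (x : H) := by rw [← sub_eq_zero]; exact hvzero
  rw [hyx]
  exact x.2

end Operators

end SelfAdjAux

end SelfAdjAux


theorem stmt_1 {H : Type*} [NormedAddCommGroup H] [InnerProductSpace ℂ H] [CompleteSpace H]
    (T : H →ₗ.[ℂ] H)
    (hT : Dense (T.domain : Set H))
    (hdense : Dense (((T.pcomp T.adjoint).domain : Set H)))
    (hinv : ∃ lam : ℂ, IsBoundedlyInvertibleShift (T.pcomp T.adjoint) lam) :
    (T.pcomp T.adjoint).adjoint = T.pcomp T.adjoint := by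
  have hfaT : (T†).IsFormalAdjoint T := LinearPMap.adjoint_isFormalAdjoint hT
  have hsym : (T.pcomp T.adjoint).IsFormalAdjoint (T.pcomp T.adjoint) := by
    intro x y
    obtain ⟨hx, hx'⟩ := LinearPMap.mem_pcomp_domain.mp x.2
    obtain ⟨hy, hy'⟩ := LinearPMap.mem_pcomp_domain.mp y.2
    set xt : (T†).domain := ⟨(x : H), hx⟩ with hxt
    set yt : (T†).domain := ⟨(y : H), hy⟩ with hyt
    set bx : T.domain := ⟨T† xt, hx'⟩ with hbx
    set by' : T.domain := ⟨T† yt, hy'⟩ with hby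
    rw [LinearPMap.pcomp_apply x hx hx', LinearPMap.pcomp_apply y hy hy']
    have e1 : (inner ℂ (T bx) ((y : H)) : ℂ) = inner ℂ (T† xt) (T† yt) := by
      calc (inner ℂ (T bx) ((y : H)) : ℂ)
          = starRingEnd ℂ (inner ℂ ((y : H)) (T bx)) := (inner_conj_symm _ _).symm
        _ = starRingEnd ℂ (inner ℂ (T† yt) ((bx : H)) : ℂ) := by rw [hfaT yt bx]
        _ = starRingEnd ℂ (inner ℂ (T† yt) (T† xt) : ℂ) := rfl
        _ = inner ℂ (T† xt) (T† yt) := inner_conj_symm _ _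
    have e2 : (inner ℂ ((x : H)) (T by') : ℂ) = inner ℂ (T† xt) (T† yt) := (hfaT xt by').symm
    exact e1.trans e2.symm
  have hnn : ∀ x : (T.pcomp T.adjoint).domain,
      ∃ q : ℝ, 0 ≤ q ∧ (inner ℂ ((x : H)) ((T.pcomp T.adjoint) x) : ℂ) = (q : ℂ) := by
    intro x
    obtain ⟨hx, hx'⟩ := LinearPMap.mem_pcomp_domain.mp x.2
    set xt : (T†).domain := ⟨(x : H), hx⟩ with hxt
    set bx : T.domain := ⟨T† xt, hx'⟩ with hbx
    refine ⟨‖T† xt‖ ^ 2, sq_nonneg _, ?_⟩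
    rw [LinearPMap.pcomp_apply x hx hx']
    have e : (inner ℂ ((x : H)) (T bx) : ℂ) = inner ℂ (T† xt) (T† xt) := (hfaT xt bx).symm
    rw [e, inner_self_eq_norm_sq_to_K]
    norm_cast
  exact SelfAdjAux.adjoint_eq hdense hsym hnn hinv
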